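/- Let φ be an anisotropic quadratic form over K. If an element a ∈ K* can be written as a product of m values represented by φ over the Laurent series field K((Y)), then a can be written as a product of m values represented by φ over K itself. -/

import Mathlib

open scoped TensorProduct

noncomputable section

/-- Nonzero values represented by a quadratic form, as a subset of the field. -/
def Dv {K V : Type*} [Field K] [AddCommGroup V] [Module K V]
    (Q : QuadraticForm K V) : Set K :=
  {a | a ≠ 0 ∧ ∃ v, Q v = a}

/-- Values represented by a quadratic form, as a set of units. -/
def Dunits {K V : Type*} [Field K] [AddCommGroup V] [Module K V]
    (Q : QuadraticForm K V) : Set Kˣ :=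
  {u | ∃ v, Q v = (u : K)}

/-- `T_K(Q)`: the subgroup of `Kˣ` generated by the values represented by `Q`. -/
def Tgrp {K V : Type*} [Field K] [AddCommGroup V] [Module K V]
    (Q : QuadraticForm K V) : Subgroup Kˣ :=
  Subgroup.closure (Dunits Q)

/-- `N_K(Q)`: the subgroup of `Kˣ` generated by products of two represented values. -/
def Ngrp {K V : Type*} [Field K] [AddCommGroup V] [Module K V]
    (Q : QuadraticForm K V) : Subgroup Kˣ :=
  Subgroup.closure {u : Kˣ | ∃ a b : Kˣ, a ∈ Dunits Q ∧ b ∈ Dunits Q ∧ u = a * b}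

/-- Products of exactly `m` values represented by `Q`. -/
def Dpow {K V : Type*} [Field K] [AddCommGroup V] [Module K V]
    (Q : QuadraticForm K V) (m : ℕ) : Set K :=
  {x | ∃ c : Fin m → K, (∀ i, c i ∈ Dv Q) ∧ x = ∏ i, c i}

/-- Isotropy of (the scalar extension of) `Q` over a commutative `K`-algebra `F`. -/
def IsotropicOver {K V : Type*} [Field K] [Invertible (2 : K)] [AddCommGroup V] [Module K V]
    (Q : QuadraticForm K V) (F : Type*) [CommRing F] [Algebra K F] : Prop :=
  ∃ w : F ⊗[K] V, w ≠ 0 ∧ Q.baseChange F w = 0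

/-- The polynomial obtained by evaluating `Q` at the generic point in the basis `b`. -/
def genPoly {K V ι : Type*} [Field K] [Invertible (2 : K)] [AddCommGroup V] [Module K V]
    [Fintype ι] (b : Module.Basis ι K V) (Q : QuadraticForm K V) : MvPolynomial ι K :=
  Q.baseChange (MvPolynomial ι K) (∑ i, MvPolynomial.X i ⊗ₜ[K] b i)

/-- The affine coordinate ring of the quadric `Q = 0` (in the coordinates given by `b`). -/
abbrev CoordRing {K V ι : Type*} [Field K] [Invertible (2 : K)] [AddCommGroup V] [Module K V]
    [Fintype ι] (b : Module.Basis ι K V) (Q : QuadraticForm K V) : Type _ :=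
  MvPolynomial ι K ⧸ Ideal.span {genPoly b Q}

/-- The function field `K(Q)` of the quadric `Q = 0`. -/
abbrev FunctionFieldQF {K V ι : Type*} [Field K] [Invertible (2 : K)] [AddCommGroup V]
    [Module K V] [Fintype ι] (b : Module.Basis ι K V) (Q : QuadraticForm K V) : Type _ :=
  FractionRing (CoordRing b Q)

/-- The Laurent series field `K((Y))`, as a field extension of `K`. -/
def LS (K : Type*) [Field K] : Type _ := LaurentSeries K

noncomputable instance (K : Type*) [Field K] : Field (LS K) :=
  inferInstanceAs (Field (LaurentSeries K))

noncomputable instance (K : Type*) [Field K] : Algebra K (LS K) :=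
  inferInstanceAs (Algebra K (LaurentSeries K))

set_option linter.unusedSectionVars false
set_option synthInstance.maxHeartbeats 1000000
set_option maxHeartbeats 1600000

section Aux

variable {K : Type*} [Field K] [Invertible (2 : K)] {n : ℕ}

lemma lc_mul {x y : LaurentSeries K} (hx : x ≠ 0) (hy : y ≠ 0) :
    (x * y).leadingCoeff = x.leadingCoeff * y.leadingCoeff := by
  rw [HahnSeries.leadingCoeff_eq, HahnSeries.order_mul hx hy,
    HahnSeries.coeff_mul_order_add_order]

lemma ofPS_coeff_neg (f : PowerSeries K) {m : ℤ} (hm : m < 0) :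
    (HahnSeries.ofPowerSeries ℤ K f).coeff m = 0 := by
  rw [HahnSeries.ofPowerSeries_apply]
  apply HahnSeries.embDomain_notin_range
  rintro ⟨k, rfl⟩
  exact absurd (Int.natCast_nonneg k) (not_le.2 hm)

lemma lc_ofPS (f : PowerSeries K) (hf : PowerSeries.constantCoeff f ≠ 0) :
    (HahnSeries.ofPowerSeries ℤ K f : LaurentSeries K).leadingCoeff
      = PowerSeries.constantCoeff f := by
  have h0 : (HahnSeries.ofPowerSeries ℤ K f).coeff (0 : ℤ) = PowerSeries.constantCoeff f := by
    simpa [PowerSeries.coeff_zero_eq_constantCoeff] using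
      HahnSeries.ofPowerSeries_apply_coeff f 0
  have hne : HahnSeries.ofPowerSeries ℤ K f ≠ 0 := by
    intro h; rw [h] at h0; exact hf (by simpa using h0.symm)
  have horder : (HahnSeries.ofPowerSeries ℤ K f).order = 0 := by
    have hle : (HahnSeries.ofPowerSeries ℤ K f).order ≤ 0 :=
      HahnSeries.order_le_of_coeff_ne_zero (h0 ▸ hf)
    rcases lt_or_eq_of_le hle with hlt | heq
    · exact absurd (ofPS_coeff_neg f hlt) (HahnSeries.coeff_order_eq_zero.not.mpr hne)
    · exact heq
  rw [HahnSeries.leadingCoeff_eq, horder, h0]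

lemma Bsymm (φ : QuadraticForm K (Fin n → K)) (v w : Fin n → K) :
    QuadraticMap.associated (R := K) φ v w = QuadraticMap.associated (R := K) φ w v := by
  conv_lhs => rw [← QuadraticMap.associated_flip (S := K) (Q := φ)]
  rw [LinearMap.flip_apply]

lemma eval_formula (φ : QuadraticForm K (Fin n → K)) {A : Type*} [CommRing A] [Algebra K A]
    (g : Fin n → A) :
    φ.baseChange A (∑ i, g i ⊗ₜ[K] Pi.basisFun K (Fin n) i) =
      ∑ i, ∑ j, (QuadraticMap.associated (R := K) φ (Pi.basisFun K (Fin n) i)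
        (Pi.basisFun K (Fin n) j)) • (g i * g j) := by
  letI : Invertible (2 : A) := (Invertible.map (algebraMap K A) 2).copy 2 (map_ofNat _ _).symm
  rw [← QuadraticMap.associated_eq_self_apply A (φ.baseChange A),
    QuadraticForm.associated_baseChange]
  simp only [map_sum, LinearMap.coe_sum, Finset.sum_apply,
    LinearMap.BilinForm.baseChange_tmul]
  rw [Finset.sum_comm]

lemma eval_K (φ : QuadraticForm K (Fin n → K)) (x : Fin n → K) :
    ∑ i, ∑ j, (QuadraticMap.associated (R := K) φ (Pi.basisFun K (Fin n) i)
        (Pi.basisFun K (Fin n) j)) * (x i * x j) = φ x := by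
  conv_rhs => rw [← QuadraticMap.associated_eq_self_apply K φ x,
    ← (Pi.basisFun K (Fin n)).sum_repr x]
  simp only [map_sum, LinearMap.map_smul, LinearMap.coe_sum, Finset.sum_apply,
    LinearMap.smul_apply, Pi.basisFun_repr, smul_eq_mul, Finset.mul_sum]
  rw [Finset.sum_comm]
  exact Finset.sum_congr rfl fun i _ => Finset.sum_congr rfl fun j _ => by
    rw [Bsymm]; ring

lemma decomp {A : Type*} [CommRing A] [Algebra K A] (w : A ⊗[K] (Fin n → K)) :
    ∃ g : Fin n → A, w = ∑ i, g i ⊗ₜ[K] Pi.basisFun K (Fin n) i := by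
  induction w using TensorProduct.induction_on with
  | zero => exact ⟨0, by simp⟩
  | tmul f v =>
      refine ⟨fun i => v i • f, ?_⟩
      conv_lhs => rw [← (Pi.basisFun K (Fin n)).sum_repr v]
      rw [TensorProduct.tmul_sum]
      exact Finset.sum_congr rfl fun i _ => by
        rw [Pi.basisFun_repr, TensorProduct.tmul_smul, TensorProduct.smul_tmul']
  | add u v hu hv =>
      obtain ⟨gu, hgu⟩ := hu
      obtain ⟨gv, hgv⟩ := hv
      refine ⟨gu + gv, ?_⟩
      rw [hgu, hgv, ← Finset.sum_add_distrib]
      exact Finset.sum_congr rfl fun i _ => by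
        rw [Pi.add_apply, TensorProduct.add_tmul]

lemma smul_decomp {A : Type*} [CommRing A] [Algebra K A] (t : A) (g : Fin n → A) :
    t • (∑ i, g i ⊗ₜ[K] Pi.basisFun K (Fin n) i)
      = ∑ i, (t * g i) ⊗ₜ[K] Pi.basisFun K (Fin n) i := by
  rw [Finset.smul_sum]
  exact Finset.sum_congr rfl fun i _ => by
    rw [TensorProduct.smul_tmul', smul_eq_mul]

lemma key (φ : QuadraticForm K (Fin n → K)) (haniso : φ.Anisotropic)
    {c : LaurentSeries K}
    (hc : c ∈ Dv (φ.baseChange (LaurentSeries K))) :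
    c.leadingCoeff ∈ Dv φ := by
  classical
  obtain ⟨hc0, w, hw⟩ := hc
  obtain ⟨g, hwsum⟩ := decomp w
  set e := Pi.basisFun K (Fin n) with he
  have hgne : ∃ i, g i ≠ 0 := by
    by_contra h
    push_neg at h
    apply hc0
    rw [← hw, hwsum]
    simp only [h, TensorProduct.zero_tmul, Finset.sum_const_zero, QuadraticMap.map_zero]
  set S : Finset (Fin n) := Finset.univ.filter (fun i => g i ≠ 0) with hS
  have hSne : S.Nonempty := by
    obtain ⟨i, hi⟩ := hgne
    exact ⟨i, Finset.mem_filter.2 ⟨Finset.mem_univ i, hi⟩⟩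
  set d : ℤ := S.inf' hSne (fun i => (g i).order) with hd
  have hdle : ∀ i ∈ S, d ≤ (g i).order := fun i hi => Finset.inf'_le _ hi
  obtain ⟨i₀, hi₀S, hi₀⟩ := Finset.exists_mem_eq_inf' hSne (fun i => (g i).order)
  have hgi₀ : g i₀ ≠ 0 := (Finset.mem_filter.1 hi₀S).2
  set p : Fin n → PowerSeries K := fun i =>
    if g i = 0 then 0 else
      (PowerSeries.X : PowerSeries K) ^ ((g i).order - d).toNat * (g i).powerSeriesPart
    with hp
  have hps : ∀ i, (HahnSeries.single (-d) (1 : K) : LaurentSeries K) * g i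
      = HahnSeries.ofPowerSeries ℤ K (p i) := by
    intro i
    by_cases h : g i = 0
    · simp [hp, h]
    · rw [hp]
      simp only [h, if_false]
      rw [map_mul, HahnSeries.ofPowerSeries_X_pow,
        Int.toNat_of_nonneg (sub_nonneg.2 (hdle i (Finset.mem_filter.2 ⟨Finset.mem_univ i, h⟩)))]
      have hsplit : (HahnSeries.single ((g i).order - d) (1 : K) : LaurentSeries K)
          = HahnSeries.single (-d) (1 : K) * HahnSeries.single ((g i).order) (1 : K) := by
        rw [HahnSeries.single_mul_single, one_mul, neg_add_eq_sub]
      rw [hsplit, mul_assoc, LaurentSeries.single_order_mul_powerSeriesPart]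
  set x : Fin n → K := fun i => PowerSeries.constantCoeff (p i) with hx
  have hxi₀ : x i₀ ≠ 0 := by
    have hpi₀ : p i₀ = (g i₀).powerSeriesPart := by
      have h0 : ((g i₀).order - d).toNat = 0 := by
        rw [hd, hi₀]; simp
      rw [hp]; simp only [hgi₀, if_false, h0, pow_zero, one_mul]
    have h2 := LaurentSeries.powerSeriesPart_coeff (g i₀) 0
    rw [Nat.cast_zero, add_zero] at h2
    show PowerSeries.constantCoeff (p i₀) ≠ 0
    rw [hpi₀, ← PowerSeries.coeff_zero_eq_constantCoeff_apply, h2]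
    exact HahnSeries.coeff_order_eq_zero.not.mpr hgi₀
  have hxne : x ≠ 0 := fun h0 => hxi₀ (by rw [h0]; rfl)
  set t : LaurentSeries K := HahnSeries.single (-d) (1 : K) with ht
  have htne : t ≠ 0 := HahnSeries.single_ne_zero one_ne_zero
  set r : PowerSeries K :=
    ∑ i, ∑ j, PowerSeries.C (QuadraticMap.associated (R := K) φ (e i) (e j)) * (p i * p j)
    with hr
  have hmain : (t * t) * c = HahnSeries.ofPowerSeries ℤ K r := by
    have h1 : φ.baseChange (LaurentSeries K) (t • w) = (t * t) * c := by
      rw [QuadraticMap.map_smul, hw, smul_eq_mul]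
    rw [← h1, hwsum, smul_decomp, eval_formula φ (fun i => t * g i), hr, map_sum]
    refine Finset.sum_congr rfl fun i _ => ?_
    rw [map_sum]
    refine Finset.sum_congr rfl fun j _ => ?_
    rw [hps i, hps j, map_mul, map_mul, Algebra.smul_def, HahnSeries.algebraMap_apply',
      ← PowerSeries.C_eq_algebraMap, he]
  have hconst : PowerSeries.constantCoeff r = φ x := by
    rw [hr]
    simp only [map_sum, map_mul, PowerSeries.constantCoeff_C]
    exact eval_K φ x
  have hphx : φ x ≠ 0 := fun h => hxne (haniso _ h)
  have hlc : c.leadingCoeff = φ x := by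
    have h2 : ((t * t) * c).leadingCoeff = c.leadingCoeff := by
      rw [lc_mul (mul_ne_zero htne htne) hc0, lc_mul htne htne, ht,
        HahnSeries.leadingCoeff_of_single, one_mul, one_mul]
    rw [hmain, lc_ofPS r (by rw [hconst]; exact hphx), hconst] at h2
    exact h2.symm
  exact ⟨hlc ▸ hphx, x, hlc.symm⟩

lemma lc_prod {ι : Type*} (s : Finset ι) (c : ι → LaurentSeries K)
    (h : ∀ i ∈ s, c i ≠ 0) :
    (∏ i ∈ s, c i).leadingCoeff = ∏ i ∈ s, (c i).leadingCoeff := by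
  classical
  induction s using Finset.induction with
  | empty => simp
  | @insert a s ha ih =>
      rw [Finset.prod_insert ha, Finset.prod_insert ha,
        lc_mul (h a (s.mem_insert_self a))
          (Finset.prod_ne_zero_iff.2 fun i hi => h i (Finset.mem_insert_of_mem hi)),
        ih fun i hi => h i (Finset.mem_insert_of_mem hi)]

lemma lc_algebraMap (a : K) :
    (algebraMap K (LaurentSeries K) a).leadingCoeff = a := by
  rw [HahnSeries.algebraMap_apply', ← PowerSeries.C_eq_algebraMap, HahnSeries.ofPowerSeries_C,
    HahnSeries.C_apply]
  exact HahnSeries.leadingCoeff_of_single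

end Aux

/-- `D_{K((Y))}(φ)^m ∩ K* ⊆ D_K(φ)^m` for anisotropic `φ`. -/
theorem stmt_10 {K : Type*} [Field K] [Invertible (2 : K)] {n : ℕ}
    (φ : QuadraticForm K (Fin n → K)) (haniso : φ.Anisotropic)
    (m : ℕ) (a : K) (ha0 : a ≠ 0)
    (ha : algebraMap K (LS K) a ∈ Dpow (φ.baseChange (LS K)) m) :
    a ∈ Dpow φ m := by
  have ha' : algebraMap K (LaurentSeries K) a ∈ Dpow (φ.baseChange (LaurentSeries K)) m := ha
  obtain ⟨c, hc, hprod⟩ := ha'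
  refine ⟨fun i => (c i).leadingCoeff, fun i => key φ haniso (hc i), ?_⟩
  calc a = (algebraMap K (LaurentSeries K) a).leadingCoeff := (lc_algebraMap a).symm
    _ = (∏ i, c i).leadingCoeff := by rw [hprod]
    _ = ∏ i, (c i).leadingCoeff := lc_prod _ _ fun i _ => (hc i).1

end
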